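/- Let x₁, x₂, x̂₁, x̂₂ ∈ ℂ² be vectors all of whose entries are Gaussian integers, with (x₁, x₂) ≠ (x̂₁, x̂₂). Then ρ₁ := Σ_{v=1}^{2} |g₁ᵀ(x_v − x̂_v)|² > 0, where g₁ᵀ = (1/√5)(1+iβ, α−i) is the first row of the Golden Code generation matrix. -/

import Mathlib

open Complex

noncomputable def goldenAlpha : ℝ := (1 + Real.sqrt 5) / 2

noncomputable def goldenBeta : ℝ := (1 - Real.sqrt 5) / 2

/-- `z ∈ ℂ` is a Gaussian integer if `z = a + b·i` with `a, b ∈ ℤ`. -/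
def IsGaussianInt (z : ℂ) : Prop := ∃ a b : ℤ, z = (a : ℂ) + (b : ℂ) * Complex.I

/-- The dot product of the first row `g₁ᵀ = (1/√5)(1+iβ, α−i)` of the
Golden Code generation matrix with a vector `d ∈ ℂ²`. -/
noncomputable def g1dot (d : Fin 2 → ℂ) : ℂ :=
  (1 / (Real.sqrt 5 : ℂ)) *
    ((1 + Complex.I * (goldenBeta : ℂ)) * d 0 + ((goldenAlpha : ℂ) - Complex.I) * d 1)

lemma aux_lin (p q : ℤ) (h : (p : ℝ) + q * Real.sqrt 5 = 0) : p = 0 ∧ q = 0 := by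
  have h5 : Irrational (Real.sqrt 5) := by
    have : Nat.Prime 5 := by norm_num
    exact this.irrational_sqrt
  by_cases hq : q = 0
  · subst hq; simp at h; exact ⟨by exact_mod_cast h, rfl⟩
  · exfalso
    apply h5
    refine ⟨(-p : ℚ) / q, ?_⟩
    have hq' : (q : ℝ) ≠ 0 := Int.cast_ne_zero.mpr hq
    push_cast
    field_simp
    linarith
lemma key (z w : ℂ) (hz : IsGaussianInt z) (hw : IsGaussianInt w)
    (h : (1 + Complex.I * (goldenBeta : ℂ)) * z + ((goldenAlpha : ℂ) - Complex.I) * w = 0) :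
    z = 0 ∧ w = 0 := by
  obtain ⟨a, b, rfl⟩ := hz
  obtain ⟨c, e, rfl⟩ := hw
  set s := Real.sqrt 5 with hs
  have hre := congrArg Complex.re h
  have him := congrArg Complex.im h
  simp [goldenAlpha, goldenBeta, Complex.add_re, Complex.add_im, Complex.mul_re,
    Complex.mul_im] at hre him
  have h1 := aux_lin (2*a - b + c + 2*e) (b + c) (by push_cast; linear_combination 2 * hre)
  have h2 := aux_lin (a + 2*b - 2*c + e) (e - a) (by push_cast; linear_combination 2 * him)
  obtain ⟨e1, e2⟩ := h1
  obtain ⟨e3, e4⟩ := h2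
  have : a = 0 ∧ b = 0 ∧ c = 0 ∧ e = 0 := by omega
  obtain ⟨rfl, rfl, rfl, rfl⟩ := this
  simp

lemma gsub {z w : ℂ} (hz : IsGaussianInt z) (hw : IsGaussianInt w) : IsGaussianInt (z - w) := by
  obtain ⟨a, b, rfl⟩ := hz
  obtain ⟨c, e, rfl⟩ := hw
  exact ⟨a - c, b - e, by push_cast; ring⟩

lemma g1dot_zero {d : Fin 2 → ℂ} (hd : ∀ u, IsGaussianInt (d u)) (h : g1dot d = 0) :
    d = 0 := by
  have hs : (Real.sqrt 5 : ℂ) ≠ 0 := by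
    simp only [ne_eq, Complex.ofReal_eq_zero]
    positivity
  have h' : (1 + Complex.I * (goldenBeta : ℂ)) * d 0 + ((goldenAlpha : ℂ) - Complex.I) * d 1 = 0 := by
    unfold g1dot at h
    field_simp at h
    rw [mul_zero] at h
    exact h
  have := key _ _ (hd 0) (hd 1) h'
  funext u
  fin_cases u <;> simp [this.1, this.2]

/-- For Gaussian-integer vectors `x₁, x₂, x̂₁, x̂₂` with `(x₁,x₂) ≠ (x̂₁,x̂₂)`,
`ρ₁ = Σ_{v=1}^{2} |g₁ᵀ(x_v − x̂_v)|² > 0`. -/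
theorem stmt10 (x₁ x₂ xh₁ xh₂ : Fin 2 → ℂ)
    (hx₁ : ∀ u, IsGaussianInt (x₁ u)) (hx₂ : ∀ u, IsGaussianInt (x₂ u))
    (hxh₁ : ∀ u, IsGaussianInt (xh₁ u)) (hxh₂ : ∀ u, IsGaussianInt (xh₂ u))
    (hne : ¬(x₁ = xh₁ ∧ x₂ = xh₂)) :
    0 < ‖g1dot (x₁ - xh₁)‖ ^ 2 + ‖g1dot (x₂ - xh₂)‖ ^ 2 := by
  by_contra hc
  push_neg at hc
  have n1 : 0 ≤ ‖g1dot (x₁ - xh₁)‖ ^ 2 := by positivity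
  have n2 : 0 ≤ ‖g1dot (x₂ - xh₂)‖ ^ 2 := by positivity
  have h1 : g1dot (x₁ - xh₁) = 0 := by
    have : ‖g1dot (x₁ - xh₁)‖ = 0 := by nlinarith
    simpa using this
  have h2 : g1dot (x₂ - xh₂) = 0 := by
    have : ‖g1dot (x₂ - xh₂)‖ = 0 := by nlinarith
    simpa using this
  have d1 : x₁ - xh₁ = 0 := g1dot_zero (fun u => gsub (hx₁ u) (hxh₁ u)) h1
  have d2 : x₂ - xh₂ = 0 := g1dot_zero (fun u => gsub (hx₂ u) (hxh₂ u)) h2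
  exact hne ⟨sub_eq_zero.mp d1, sub_eq_zero.mp d2⟩
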